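/- The composite of two polynomials (given by pullback, dependent product, and composition of the constituent functors) is again a polynomial: the composite of the polynomial functors induced by I ← A → B → J and J ← C → D → K is induced by a single polynomial I ← A' → D' → K. -/

import Mathlib

open CategoryTheory

/-- The polynomial functor `Set/I ⥤ Set/J` (in indexed-family form) induced by a
polynomial `I ←s– A –f→ B –t→ J`. -/
@[simps]
def polyFunctor {I J A B : Type} (s : A → I) (f : A → B) (t : B → J) :
    (∀ _ : I, Type) ⥤ (∀ _ : J, Type) where
  obj X j := Σ b : { b : B // t b = j }, ∀ a : { a : A // f a = b.1 }, X (s a.1)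
  map {X Y} η j := TypeCat.ofHom fun x => ⟨x.1, fun a => η (s a.1) (x.2 a)⟩

/-- the middle object of the composite polynomial -/
def PolyD' {J B C D : Type} (t : B → J) (u : C → J) (g : C → D) : Type :=
  Σ d : D, ∀ c : {c : C // g c = d}, {b : B // t b = u c.1}

/-- the left object of the composite polynomial -/
def PolyA' {J A B C D : Type} (f : A → B) (t : B → J) (u : C → J) (g : C → D) : Type :=
  Σ d' : PolyD' t u g, Σ c : {c : C // g c = d'.1}, {a : A // f a = (d'.2 c).1}

def polyS' {I J A B C D : Type} (s : A → I) (f : A → B) (t : B → J) (u : C → J)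
    (g : C → D) (x : PolyA' f t u g) : I := s x.2.2.1

def polyF' {J A B C D : Type} (f : A → B) (t : B → J) (u : C → J)
    (g : C → D) (x : PolyA' f t u g) : PolyD' t u g := x.1

def polyT' {J K B C D : Type} (t : B → J) (u : C → J) (g : C → D) (v : D → K)
    (x : PolyD' t u g) : K := v x.1

def polyFwd {I J K A B C D : Type}
    (s : A → I) (f : A → B) (t : B → J) (u : C → J) (g : C → D) (v : D → K)
    (X : ∀ _ : I, Type) (k : K) :
    (polyFunctor s f t ⋙ polyFunctor u g v).obj X k →
      (polyFunctor (polyS' s f t u g) (polyF' f t u g) (polyT' t u g v)).obj X k :=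
  fun x =>
    ⟨⟨⟨x.1.1, fun c => (x.2 c).1⟩, x.1.2⟩,
     fun a' =>
       match a' with
       | ⟨⟨d₀, c, a⟩, h⟩ => by
         cases h
         exact (x.2 c).2 a⟩

def polyBwd {I J K A B C D : Type}
    (s : A → I) (f : A → B) (t : B → J) (u : C → J) (g : C → D) (v : D → K)
    (X : ∀ _ : I, Type) (k : K) :
    (polyFunctor (polyS' s f t u g) (polyF' f t u g) (polyT' t u g v)).obj X k →
      (polyFunctor s f t ⋙ polyFunctor u g v).obj X k :=
  fun y =>
    ⟨⟨y.1.1.1, y.1.2⟩,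
     fun c =>
       ⟨y.1.1.2 c, fun a => y.2 ⟨⟨y.1.1, c, a⟩, rfl⟩⟩⟩

/-- Gambino–Kock, Prop. 1.12: the composite of the polynomial
functors induced by `I ← A → B → J` and `J ← C → D → K` is induced by a single
polynomial `I ← A' → D' → K`. -/
theorem polyFunctor_comp {I J K A B C D : Type}
    (s : A → I) (f : A → B) (t : B → J)
    (u : C → J) (g : C → D) (v : D → K) :
    ∃ (A' D' : Type) (s' : A' → I) (f' : A' → D') (t' : D' → K),
      Nonempty (polyFunctor s f t ⋙ polyFunctor u g v ≅ polyFunctor s' f' t') := by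
  refine ⟨PolyA' f t u g, PolyD' t u g, polyS' s f t u g, polyF' f t u g,
    polyT' t u g v, ⟨?_⟩⟩
  refine NatIso.ofComponents (fun X => ?_) ?_
  · refine { hom := fun k => TypeCat.ofHom (polyFwd s f t u g v X k),
             inv := fun k => TypeCat.ofHom (polyBwd s f t u g v X k),
             hom_inv_id := ?_, inv_hom_id := ?_ }
    · funext k; ext x
      rfl
    · funext k; ext y
      obtain ⟨⟨⟨d, ψ⟩, hd⟩, χ⟩ := y
      refine congrArg (fun w => (⟨⟨⟨d, ψ⟩, hd⟩, w⟩ :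
        (polyFunctor (polyS' s f t u g) (polyF' f t u g) (polyT' t u g v)).obj X k)) ?_
      funext a'
      obtain ⟨⟨d₀, c, a⟩, h⟩ := a'
      cases h
      rfl
  · intro X Y η
    funext k; ext x
    obtain ⟨⟨d, hd⟩, φ⟩ := x
    refine congrArg (Sigma.mk _) ?_
    funext a'
    obtain ⟨⟨d₀, c, a⟩, h⟩ := a'
    cases h
    rfl
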